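/- Algorithm d-encode, applied to any binary string w of length l·m − 1 with m ≥ ⌈2 log₂ l⌉ + 2, outputs an array of exactly l pairwise distinct binary strings of length m. -/

import Mathlib

/-- Binary representation of `x` using `len` bits (most significant first). -/
def binRep (x len : ℕ) : List Bool :=
  (List.range len).map (fun i => Nat.testBit x (len - 1 - i))

/-- Find the first pair of indices `i < j` with equal blocks. -/
def findDup (bs : List (List Bool)) : Option (ℕ × ℕ) :=
  (List.range bs.length).findSome? (fun i =>
    (List.range bs.length).findSome? (fun j =>
      if i < j ∧ bs[i]? = bs[j]? then some (i, j) else none))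

/-- One duplicate-elimination step of the d-encode algorithm. -/
def dStep (l m : ℕ) (bs : List (List Bool)) : List (List Bool) :=
  let p := Nat.clog 2 l
  match findDup bs with
  | none => bs
  | some (i, j) =>
    let bs' := bs.eraseIdx j
    let avail : ℕ → Bool := fun k =>
      decide (1 ≤ k) &&
      bs'.all (fun b => decide (b.take (p + 1) ≠ binRep k (p + 1)))
    let j' := (((List.range (2 * l)).filter avail).getD (j - 1) 0)
    bs' ++ [binRep j' (p + 1) ++ binRep i p ++ List.replicate (m - 2 * p - 1) false]

/-- The d-encode algorithm: segment `w ++ [1]` into `l` blocks of length `m`,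
then eliminate duplicates (at most `l` elimination rounds are ever needed,
and `dStep` is the identity once no duplicates remain). -/
def dEncode (l m : ℕ) (w : List Bool) : List (List Bool) :=
  (dStep l m)^[l] ((List.range l).map (fun a => ((w ++ [true]).drop (a * m)).take m))

/- ### Auxiliary lemmas -/

lemma length_binRep (x n : ℕ) : (binRep x n).length = n := by simp [binRep]

lemma binRep_inj {a b n : ℕ} (ha : a < 2 ^ n) (hb : b < 2 ^ n)
    (h : binRep a n = binRep b n) : a = b := by
  apply Nat.eq_of_testBit_eq
  intro i
  by_cases hi : i < n
  · have h' := congrArg (fun L => L[n - 1 - i]?) h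
    simp only [binRep, List.getElem?_map, List.getElem?_range (by omega : n - 1 - i < n),
      Option.map_some] at h'
    have : n - 1 - (n - 1 - i) = i := by omega
    rw [this] at h'
    exact Option.some.inj h'
  · rw [Nat.testBit_eq_false_of_lt (lt_of_lt_of_le ha (Nat.pow_le_pow_right (by norm_num) (by omega))),
      Nat.testBit_eq_false_of_lt (lt_of_lt_of_le hb (Nat.pow_le_pow_right (by norm_num) (by omega)))]

/-- The availability predicate from `dStep`, as a standalone definition. -/
def availF (p : ℕ) (bs' : List (List Bool)) (k : ℕ) : Bool :=
  decide (1 ≤ k) &&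
  bs'.all (fun b => decide (b.take (p + 1) ≠ binRep k (p + 1)))

lemma findDup_eq_none_iff (bs : List (List Bool)) : findDup bs = none ↔ bs.Nodup := by
  rw [List.nodup_iff_getElem?_ne_getElem?, findDup]
  simp only [List.findSome?_eq_none_iff, List.mem_range, ite_eq_right_iff, reduceCtorEq,
    imp_false, not_and]
  constructor
  · intro h i j hij hj
    exact h i (lt_trans hij hj) j hj hij
  · intro h i _ j hj hij
    exact h i j hij hj

lemma findDup_some {bs : List (List Bool)} {i j : ℕ} (h : findDup bs = some (i, j)) :
    i < j ∧ j < bs.length ∧ bs[i]? = bs[j]? := by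
  rw [findDup] at h
  obtain ⟨a, ha, ha'⟩ := List.exists_of_findSome?_eq_some h
  obtain ⟨b, hb, hb'⟩ := List.exists_of_findSome?_eq_some ha'
  split at hb'
  · rename_i hc
    obtain ⟨rfl, rfl⟩ : a = i ∧ b = j := by
      constructor <;> [exact congrArg Prod.fst (Option.some.inj hb');
        exact congrArg Prod.snd (Option.some.inj hb')]
    exact ⟨hc.1, List.mem_range.mp hb, hc.2⟩
  · exact absurd hb' (by simp)

lemma dStep_eq_of_some {l m : ℕ} {bs : List (List Bool)} {i j : ℕ}
    (h : findDup bs = some (i, j)) :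
    dStep l m bs = bs.eraseIdx j ++
      [binRep (((List.range (2 * l)).filter (availF (Nat.clog 2 l) (bs.eraseIdx j))).getD (j - 1) 0)
          (Nat.clog 2 l + 1) ++
        binRep i (Nat.clog 2 l) ++ List.replicate (m - 2 * Nat.clog 2 l - 1) false] := by
  rw [dStep, h]
  rfl

/-- Counting: at least `l` available candidates remain. -/
lemma le_filter_avail_length (l p : ℕ) (hl : 2 ≤ l) (hp : l ≤ 2 ^ p)
    (bs' : List (List Bool)) (hlen : bs'.length = l - 1) :
    l ≤ ((List.range (2 * l)).filter (availF p bs')).length := by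
  set q : ℕ → Bool := availF p bs' with hq
  have hsplit := List.length_eq_countP_add_countP q (l := List.range (2 * l))
  rw [List.length_range, List.countP_eq_length_filter, List.countP_eq_length_filter] at hsplit
  -- bound the "bad" list
  set badl : List ℕ := (List.range (2 * l)).filter (fun a => decide ¬q a = true) with hbad
  have hbadnodup : badl.Nodup := List.nodup_range.filter _
  set f : ℕ → Option (List Bool) :=
    fun k => if k = 0 then none else some (binRep k (p + 1)) with hf
  have h2l : 2 * l ≤ 2 ^ (p + 1) := by
    have h := Nat.mul_le_mul_left 2 hp
    have h2 : 2 ^ (p + 1) = 2 * 2 ^ p := by ring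
    omega
  have hmapnodup : (badl.map f).Nodup := by
    refine hbadnodup.map_on ?_
    intro x hx y hy hfxy
    have hx2 : x < 2 * l := List.mem_range.mp (List.mem_of_mem_filter hx)
    have hy2 : y < 2 * l := List.mem_range.mp (List.mem_of_mem_filter hy)
    rcases eq_or_ne x 0 with rfl | hx0
    · rcases eq_or_ne y 0 with rfl | hy0
      · rfl
      · simp [hf, hy0] at hfxy
    · rcases eq_or_ne y 0 with rfl | hy0
      · simp [hf, hx0] at hfxy
      · simp only [hf, if_neg hx0, if_neg hy0, Option.some.injEq] at hfxy
        exact binRep_inj (lt_of_lt_of_le hx2 h2l) (lt_of_lt_of_le hy2 h2l) hfxy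
  set S : Finset (Option (List Bool)) :=
    insert none ((bs'.map (fun b => some (b.take (p + 1)))).toFinset) with hS
  have hsub : (badl.map f).toFinset ⊆ S := by
    intro o ho
    rw [List.mem_toFinset, List.mem_map] at ho
    obtain ⟨k, hk, rfl⟩ := ho
    by_cases hk0 : k = 0
    · simp [hf, hk0, hS]
    · have hqk : q k = false := by
        have := List.of_mem_filter hk
        simpa using this
      rw [hq, availF] at hqk
      have h1k : decide (1 ≤ k) = true := by simp; omega
      rw [h1k, Bool.true_and] at hqk
      have : ¬ (∀ b ∈ bs', (decide (b.take (p + 1) ≠ binRep k (p + 1))) = true) := by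
        rw [← List.all_eq_true, hqk]; simp
      push_neg at this
      obtain ⟨b, hb, hbe⟩ := this
      have hbe' : b.take (p + 1) = binRep k (p + 1) := by simpa using hbe
      simp only [hf, hk0, if_neg hk0, hS, Finset.mem_insert]
      right
      rw [List.mem_toFinset, List.mem_map]
      exact ⟨b, hb, by rw [hbe']⟩
  have hbadlen : badl.length ≤ l := by
    have h1 : badl.length = (badl.map f).length := (List.length_map _).symm
    have h2 : (badl.map f).length = (badl.map f).toFinset.card :=
      (List.toFinset_card_of_nodup hmapnodup).symm
    have h3 : (badl.map f).toFinset.card ≤ S.card := Finset.card_le_card hsub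
    have h4 : S.card ≤ 1 + (bs'.map (fun b => some (b.take (p + 1)))).toFinset.card := by
      rw [hS]
      have := Finset.card_insert_le (none : Option (List Bool))
        ((bs'.map (fun b => some (b.take (p + 1)))).toFinset)
      omega
    have h5 : (bs'.map (fun b => some (b.take (p + 1)))).toFinset.card ≤ l - 1 := by
      calc _ ≤ (bs'.map (fun b => some (b.take (p + 1)))).length := List.toFinset_card_le _
        _ = l - 1 := by rw [List.length_map, hlen]
    omega
  omega

lemma take_append_binRep (j' p : ℕ) (rest : List Bool) :
    (binRep j' (p + 1) ++ rest).take (p + 1) = binRep j' (p + 1) := by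
  have := List.take_left (l₁ := binRep j' (p + 1)) (l₂ := rest)
  rwa [length_binRep] at this

/-- Main step lemma, duplicate case. -/
lemma dStep_spec_some {l m : ℕ} (hl : 2 ≤ l) (hm : 2 * Nat.clog 2 l + 2 ≤ m)
    {bs : List (List Bool)} (hlen : bs.length = l) (hblk : ∀ b ∈ bs, b.length = m)
    {i j : ℕ} (h : findDup bs = some (i, j)) :
    (dStep l m bs).length = l ∧ (∀ b ∈ dStep l m bs, b.length = m) ∧
    (dStep l m bs).toFinset.card = bs.toFinset.card + 1 ∧
    bs.toFinset.card ≤ l - 1 := by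
  obtain ⟨hij, hjlen, hbij⟩ := findDup_some h
  set p := Nat.clog 2 l with hp
  have hple : l ≤ 2 ^ p := Nat.le_pow_clog (by norm_num) l
  set bs' := bs.eraseIdx j with hbs'
  have hbs'len : bs'.length = l - 1 := by
    rw [hbs', List.length_eraseIdx, if_pos hjlen, hlen]
  set j' := ((List.range (2 * l)).filter (availF p bs')).getD (j - 1) 0 with hj'
  set nb := binRep j' (p + 1) ++ binRep i p ++ List.replicate (m - 2 * p - 1) false with hnb
  have hstep : dStep l m bs = bs' ++ [nb] := dStep_eq_of_some h
  -- j' is a genuinely available value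
  have hfl : l ≤ ((List.range (2 * l)).filter (availF p bs')).length :=
    le_filter_avail_length l p hl hple bs' hbs'len
  have hjl : j < l := hlen ▸ hjlen
  have hj1 : j - 1 < ((List.range (2 * l)).filter (availF p bs')).length := by omega
  have hj'mem : j' ∈ (List.range (2 * l)).filter (availF p bs') := by
    rw [hj', List.getD_eq_getElem _ _ hj1]
    exact List.getElem_mem _
  have havail : availF p bs' j' = true := List.of_mem_filter hj'mem
  have hfresh : ∀ b ∈ bs', b ≠ nb := by
    intro b hb hbeq
    rw [availF, Bool.and_eq_true, List.all_eq_true] at havail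
    have := havail.2 b hb
    rw [decide_eq_true_iff] at this
    apply this
    rw [hbeq, hnb, List.append_assoc, take_append_binRep]
  -- blocks of bs' come from bs
  have hbs'blk : ∀ b ∈ bs', b.length = m := fun b hb =>
    hblk b ((List.eraseIdx_sublist bs j).mem hb)
  have hij' : i < bs.length := by omega
  have hbieq : bs[i] = bs[j] := by
    rw [List.getElem?_eq_getElem hij', List.getElem?_eq_getElem hjlen] at hbij
    exact Option.some.inj hbij
  have herase : bs'.toFinset = bs.toFinset := by
    apply Finset.Subset.antisymm
    · intro x hx
      rw [List.mem_toFinset] at hx ⊢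
      exact (List.eraseIdx_sublist bs j).mem hx
    · intro x hx
      rw [List.mem_toFinset] at hx ⊢
      rw [List.mem_iff_getElem] at hx
      obtain ⟨k, hk, rfl⟩ := hx
      by_cases hkj : k = j
      · subst hkj
        rw [← hbieq, hbs', List.mem_eraseIdx_iff_getElem]
        exact ⟨i, hij', by omega, rfl⟩
      · rw [hbs', List.mem_eraseIdx_iff_getElem]
        exact ⟨k, hk, hkj, rfl⟩
  refine ⟨?_, ?_, ?_, ?_⟩
  · rw [hstep, List.length_append, hbs'len, List.length_singleton]; omega
  · intro b hb
    rw [hstep, List.mem_append] at hb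
    rcases hb with hb | hb
    · exact hbs'blk b hb
    · rw [List.mem_singleton] at hb
      subst hb
      rw [hnb]
      simp only [List.length_append, length_binRep, List.length_replicate]
      omega
  · -- card goes up by one
    have hnbnot : nb ∉ bs'.toFinset := by
      rw [List.mem_toFinset]
      intro hmem
      exact hfresh nb hmem rfl
    rw [hstep]
    have : (bs' ++ [nb]).toFinset = insert nb bs'.toFinset := by
      simp [List.toFinset_append, Finset.insert_eq, Finset.union_comm, -Finset.union_singleton]
    rw [this, Finset.card_insert_of_notMem hnbnot, herase]
  · calc bs.toFinset.card = bs'.toFinset.card := by rw [herase]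
      _ ≤ bs'.length := List.toFinset_card_le _
      _ = l - 1 := hbs'len

lemma nodup_of_card_eq {bs : List (List Bool)} (h : bs.toFinset.card = bs.length) :
    bs.Nodup := by
  rw [List.card_toFinset] at h
  have := (List.dedup_sublist bs).eq_of_length h
  rw [← this]
  exact List.nodup_dedup bs

/-- Iterating `dStep` enough times yields a nodup list with invariants preserved. -/
lemma iterate_dStep {l m : ℕ} (hl : 2 ≤ l) (hm : 2 * Nat.clog 2 l + 2 ≤ m) :
    ∀ (n : ℕ) (bs : List (List Bool)), bs.length = l → (∀ b ∈ bs, b.length = m) →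
      l - bs.toFinset.card ≤ n →
      ((dStep l m)^[n] bs).length = l ∧ (∀ b ∈ (dStep l m)^[n] bs, b.length = m) ∧
        ((dStep l m)^[n] bs).Nodup := by
  intro n
  induction n with
  | zero =>
    intro bs hlen hblk hcard
    simp only [Function.iterate_zero_apply]
    refine ⟨hlen, hblk, ?_⟩
    apply nodup_of_card_eq
    have := List.toFinset_card_le bs
    omega
  | succ n ih =>
    intro bs hlen hblk hcard
    rw [Function.iterate_succ_apply]
    rcases hfd : findDup bs with _ | ⟨i, j⟩
    · have hid : dStep l m bs = bs := by rw [dStep, hfd]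
      rw [hid]
      have hnd : bs.Nodup := (findDup_eq_none_iff bs).mp hfd
      exact ih bs hlen hblk (by rw [List.toFinset_card_of_nodup hnd, hlen]; omega)
    · obtain ⟨h1, h2, h3, h4⟩ := dStep_spec_some hl hm hlen hblk hfd
      exact ih _ h1 h2 (by omega)

/-- d-encode outputs exactly `l` pairwise distinct binary strings of length `m`. -/
theorem stmt_8 (l m : ℕ) (hl : 2 ≤ l) (hm : 2 * Nat.clog 2 l + 2 ≤ m)
    (w : List Bool) (hw : w.length = l * m - 1) :
    (dEncode l m w).length = l ∧
    (∀ b ∈ dEncode l m w, b.length = m) ∧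
    (dEncode l m w).Pairwise (· ≠ ·) := by
  set bs0 := (List.range l).map (fun a => ((w ++ [true]).drop (a * m)).take m) with hbs0
  have hm2 : 2 ≤ m := by omega
  have hwlen : (w ++ [true]).length = l * m := by
    rw [List.length_append, List.length_singleton, hw]
    have : 1 ≤ l * m := Nat.one_le_iff_ne_zero.mpr (by positivity)
    omega
  have hlen0 : bs0.length = l := by rw [hbs0, List.length_map, List.length_range]
  have hblk0 : ∀ b ∈ bs0, b.length = m := by
    intro b hb
    rw [hbs0, List.mem_map] at hb
    obtain ⟨a, ha, rfl⟩ := hb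
    rw [List.mem_range] at ha
    rw [List.length_take, List.length_drop, hwlen]
    have : (a + 1) * m ≤ l * m := Nat.mul_le_mul_right m ha
    rw [add_mul, one_mul] at this
    omega
  have key := iterate_dStep hl hm l bs0 hlen0 hblk0 (by omega)
  rw [dEncode]
  exact ⟨key.1, key.2.1, key.2.2⟩
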